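/- Fix N ≥ 3 and an increment field δ⁽⁰⁾ ∈ ℝ^N with δ⁽⁰⁾(i) ≥ 0 for all i, and set M := ∑_{i=1}^N δ⁽⁰⁾(i). Let δ⁽ᵐ⁾ denote the result of applying m full cyclic sweeps avoiding the closing edge (each sweep applies the linear increment update successively at edges k = 1,…,N−1). Then: (i) δ⁽ᵐ⁾(i) ≥ 0 for all m ≥ 0 and all i; (ii) ∑_{i=1}^N δ⁽ᵐ⁾(i) = M for all m; (iii) the sequence m ↦ δ⁽ᵐ⁾(N) is nondecreasing; and (iv) with c := 2^{−(N−2)}, one has M − δ⁽ᵐ⁾(N) ≤ (1−c)^m·(M − δ⁽⁰⁾(N)) for all m ≥ 0. In particular δ⁽ᵐ⁾(N) → M as m → ∞. -/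
import Mathlib


open Filter

/-- The linear increment update at edge `k`: `δ(k)` is reset to `0` and `δ(k)/2` is added
to each of the cyclic neighbours `δ(k-1)` and `δ(k+1)`. -/
noncomputable def incUpdate {N : ℕ} (δ : ZMod N → ℝ) (k : ZMod N) : ZMod N → ℝ :=
  fun i => if i = k then 0
    else if i = k - 1 ∨ i = k + 1 then δ i + δ k / 2
    else δ i

/-- Apply the linear increment updates successively at edges `1, 2, …, j`. -/
noncomputable def sweepAux {N : ℕ} (δ : ZMod N → ℝ) : ℕ → ZMod N → ℝ
  | 0 => δ
  | j + 1 => incUpdate (sweepAux δ j) ((j + 1 : ℕ) : ZMod N)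

/-- One cyclic sweep avoiding the closing edge: updates at edges `1, …, N-1`
(vertex `N` is `0` in `ZMod N`). -/
noncomputable def sweep {N : ℕ} (δ : ZMod N → ℝ) : ZMod N → ℝ := sweepAux δ (N - 1)

section
variable {N : ℕ}

lemma incUpdate_apply_other (f : ZMod N → ℝ) (k i : ZMod N)
    (h1 : i ≠ k) (h2 : i ≠ k - 1) (h3 : i ≠ k + 1) : incUpdate f k i = f i := by
  unfold incUpdate
  rw [if_neg h1, if_neg (by rintro (h | h); exacts [h2 h, h3 h])]

lemma incUpdate_apply_nb (f : ZMod N → ℝ) (k i : ZMod N)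
    (h1 : i ≠ k) (h2 : i = k - 1 ∨ i = k + 1) : incUpdate f k i = f i + f k / 2 := by
  unfold incUpdate
  rw [if_neg h1, if_pos h2]

lemma cast_injN [NeZero N] {a b : ℕ} (ha : a < N) (hb : b < N) (h : (a : ZMod N) = b) :
    a = b := by
  have := congrArg ZMod.val h
  rwa [ZMod.val_cast_of_lt ha, ZMod.val_cast_of_lt hb] at this

lemma zmod_sum_eq [NeZero N] (f : ZMod N → ℝ) :
    ∑ i : ZMod N, f i = ∑ i ∈ Finset.range N, f (i : ZMod N) := by
  rw [Finset.sum_nbij' (i := fun i => ZMod.val i) (j := fun i => ((i : ℕ) : ZMod N))]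
  · intro a _; exact Finset.mem_range.mpr (ZMod.val_lt a)
  · intro a _; exact Finset.mem_univ _
  · intro a _; exact ZMod.natCast_zmod_val a
  · intro a ha; exact ZMod.val_cast_of_lt (Finset.mem_range.mp ha)
  · intro a _; rw [ZMod.natCast_zmod_val]

variable (hN : 3 ≤ N)
include hN

lemma neighbors_ne (k : ZMod N) : k - 1 ≠ k ∧ k + 1 ≠ k ∧ k - 1 ≠ k + 1 := by
  have : (Fact (1 < N)) := ⟨by omega⟩
  refine ⟨?_, ?_, ?_⟩
  · intro h; apply_fun (· - k) at h; simp at h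
  · intro h; apply_fun (· - k) at h; simp at h
  · intro h
    have h2 : ((2 : ℕ) : ZMod N) = 0 := by push_cast; linear_combination -h
    rw [ZMod.natCast_eq_zero_iff] at h2
    have := Nat.le_of_dvd (by norm_num) h2
    omega

omit hN in
lemma incUpdate_nonneg {δ : ZMod N → ℝ} (h : ∀ i, 0 ≤ δ i) (k : ZMod N) :
    ∀ i, 0 ≤ incUpdate δ k i := by
  intro i
  unfold incUpdate
  split_ifs with h1 h2
  · exact le_refl _
  · have := h i; have := h k; linarith
  · exact h i

lemma incUpdate_sum [NeZero N] (δ : ZMod N → ℝ) (k : ZMod N) :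
    ∑ i : ZMod N, incUpdate δ k i = ∑ i : ZMod N, δ i := by
  obtain ⟨hm1, hp1, hmp⟩ := neighbors_ne hN k
  have hrw : ∀ i, incUpdate δ k i
      = δ i + (if i = k then -δ k else 0)
        + (if i ∈ ({k - 1, k + 1} : Finset (ZMod N)) then δ k / 2 else 0) := by
    intro i
    unfold incUpdate
    have hknot : k ∉ ({k - 1, k + 1} : Finset (ZMod N)) := by
      simp only [Finset.mem_insert, Finset.mem_singleton]
      rintro (h | h); exacts [hm1 h.symm, hp1 h.symm]
    by_cases h1 : i = k
    · subst h1
      rw [if_pos rfl, if_pos rfl, if_neg hknot]; ring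
    · rw [if_neg h1, if_neg h1]
      by_cases h2 : i = k - 1 ∨ i = k + 1
      · rw [if_pos h2, if_pos (by simpa using h2)]; ring
      · rw [if_neg h2, if_neg (by simpa using h2)]; ring
  simp only [hrw]
  rw [Finset.sum_add_distrib, Finset.sum_add_distrib]
  rw [Finset.sum_ite_eq' Finset.univ k (fun _ => -δ k)]
  rw [Finset.sum_ite_mem, Finset.univ_inter, Finset.sum_const]
  rw [Finset.card_insert_of_notMem (by simpa using hmp), Finset.card_singleton]
  simp; ring

lemma sweepAux_nonneg {δ : ZMod N → ℝ} (h : ∀ i, 0 ≤ δ i) (j : ℕ) :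
    ∀ i, 0 ≤ sweepAux δ j i := by
  induction j with
  | zero => exact h
  | succ j ih => exact incUpdate_nonneg ih _

lemma sweepAux_sum [NeZero N] (δ : ZMod N → ℝ) (j : ℕ) :
    ∑ i : ZMod N, sweepAux δ j i = ∑ i : ZMod N, δ i := by
  induction j with
  | zero => rfl
  | succ j ih => rw [show sweepAux δ (j+1) = incUpdate (sweepAux δ j) ((j+1 : ℕ) : ZMod N) from rfl,
      incUpdate_sum hN, ih]

/-- The main invariant along a sweep. -/
lemma sweepAux_invariant [NeZero N] {δ : ZMod N → ℝ} (hpos : ∀ i, 0 ≤ δ i)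
    (j : ℕ) (hj1 : 1 ≤ j) (hj2 : j ≤ N - 2) :
    (∀ n : ℕ, j + 1 < n → n < N → sweepAux δ j ((n : ℕ) : ZMod N) = δ ((n : ℕ) : ZMod N)) ∧
    (sweepAux δ j 0 = δ 0 + δ 1 / 2) ∧
    ((1/2 : ℝ) ^ (j - 1) * ∑ i ∈ Finset.Icc 2 (j+1), δ ((i : ℕ) : ZMod N)
      ≤ sweepAux δ j (((j + 1 : ℕ)) : ZMod N)) := by
  induction j, hj1 using Nat.le_induction with
  | base =>
    -- j = 1 : one update at edge 1
    have h1 : sweepAux δ 1 = incUpdate δ ((1 : ℕ) : ZMod N) := rfl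
    have e0 : ((0 : ℕ) : ZMod N) = 0 := by norm_num
    have key : ∀ a b : ℕ, a < N → b < N → a ≠ b → ((a : ℕ) : ZMod N) ≠ b := by
      intro a b ha hb hab h; exact hab (cast_injN ha hb h)
    refine ⟨?_, ?_, ?_⟩
    · intro n hn1 hn2
      rw [h1]
      apply incUpdate_apply_other
      · exact key n 1 hn2 (by omega) (by omega)
      · rw [show ((1:ℕ) : ZMod N) - 1 = ((0:ℕ) : ZMod N) by push_cast; ring]
        exact key n 0 hn2 (by omega) (by omega)
      · rw [show ((1:ℕ) : ZMod N) + 1 = ((2:ℕ) : ZMod N) by push_cast; ring]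
        exact key n 2 hn2 (by omega) (by omega)
    · rw [h1]
      rw [show (0 : ZMod N) = ((0:ℕ) : ZMod N) by norm_num]
      rw [incUpdate_apply_nb]
      · push_cast; ring_nf
      · exact key 0 1 (by omega) (by omega) (by omega)
      · left; push_cast; ring
    · rw [h1]
      rw [show (((1+1 : ℕ)) : ZMod N) = ((2:ℕ) : ZMod N) by norm_num]
      rw [incUpdate_apply_nb]
      · simp only [pow_zero, one_mul, Finset.Icc_self, Finset.sum_singleton]
        have := hpos ((1 : ℕ) : ZMod N)
        push_cast
        push_cast at this
        linarith
      · exact key 2 1 (by omega) (by omega) (by omega)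
      · right; push_cast; ring
  | succ j hj ih =>
    have hjN : j ≤ N - 2 := by omega
    obtain ⟨H1, H2, H3⟩ := ih hjN
    have key : ∀ a b : ℕ, a < N → b < N → a ≠ b → ((a : ℕ) : ZMod N) ≠ b := by
      intro a b ha hb hab h; exact hab (cast_injN ha hb h)
    have hstep : sweepAux δ (j+1) = incUpdate (sweepAux δ j) ((j+1 : ℕ) : ZMod N) := rfl
    have em1 : ((j+1 : ℕ) : ZMod N) - 1 = ((j : ℕ) : ZMod N) := by push_cast; ring
    have ep1 : ((j+1 : ℕ) : ZMod N) + 1 = ((j+2 : ℕ) : ZMod N) := by push_cast; ring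
    refine ⟨?_, ?_, ?_⟩
    · intro n hn1 hn2
      rw [hstep]
      rw [incUpdate_apply_other _ _ _ (key n (j+1) hn2 (by omega) (by omega))
        (by rw [em1]; exact key n j hn2 (by omega) (by omega))
        (by rw [ep1]; exact key n (j+2) hn2 (by omega) (by omega))]
      exact H1 n (by omega) hn2
    · rw [hstep]
      rw [incUpdate_apply_other]
      · exact H2
      · rw [show (0 : ZMod N) = ((0:ℕ) : ZMod N) by norm_num]
        exact key 0 (j+1) (by omega) (by omega) (by omega)
      · rw [em1, show (0 : ZMod N) = ((0:ℕ) : ZMod N) by norm_num]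
        exact key 0 j (by omega) (by omega) (by omega)
      · rw [ep1, show (0 : ZMod N) = ((0:ℕ) : ZMod N) by norm_num]
        exact key 0 (j+2) (by omega) (by omega) (by omega)
    · rw [hstep]
      rw [show (((j+1+1 : ℕ)) : ZMod N) = ((j+2 : ℕ) : ZMod N) by norm_cast]
      rw [incUpdate_apply_nb _ _ _ (key (j+2) (j+1) (by omega) (by omega) (by omega))
        (Or.inr ep1.symm)]
      have hv : sweepAux δ j ((j+2 : ℕ) : ZMod N) = δ ((j+2 : ℕ) : ZMod N) :=
        H1 (j+2) (by omega) (by omega)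
      rw [hv]
      rw [Finset.sum_Icc_succ_top (by omega : 2 ≤ j + 1 + 1)]
      have hd : (0:ℝ) ≤ δ ((j+2 : ℕ) : ZMod N) := hpos _
      have hpow : ((1:ℝ)/2) ^ (j + 1 - 1) = (1/2) * (1/2) ^ (j-1) := by
        rw [show j + 1 - 1 = (j - 1) + 1 by omega]; ring
      have hpow1 : ((1:ℝ)/2) ^ (j + 1 - 1) ≤ 1 := by
        apply pow_le_one₀ <;> norm_num
      rw [hpow, mul_add]
      have hb1 : (1/2 : ℝ) * (1/2) ^ (j-1) * ∑ i ∈ Finset.Icc 2 (j+1), δ ((i : ℕ) : ZMod N)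
          ≤ sweepAux δ j ((j+1 : ℕ) : ZMod N) / 2 := by
        have := H3
        linarith
      have hb2 : (1/2 : ℝ) * (1/2) ^ (j-1) * δ ((j+1+1 : ℕ) : ZMod N)
          ≤ δ ((j+2 : ℕ) : ZMod N) := by
        rw [show ((j+1+1 : ℕ)) = j+2 by omega]
        calc (1/2 : ℝ) * (1/2) ^ (j-1) * δ ((j+2 : ℕ) : ZMod N)
            ≤ 1 * δ ((j+2 : ℕ) : ZMod N) := by
              apply mul_le_mul_of_nonneg_right _ hd
              rw [← hpow] at *; exact hpow1
          _ = _ := one_mul _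
      linarith

lemma sum_split [NeZero N] (g : ℕ → ℝ) :
    ∑ i ∈ Finset.range N, g i = g 0 + g 1 + ∑ i ∈ Finset.Icc 2 (N-1), g i := by
  have hIcc : Finset.Ico 2 N = Finset.Icc 2 (N-1) := by
    rw [show N = (N-1)+1 from by omega, Finset.Ico_add_one_right_eq_Icc]
    congr 1
  rw [Finset.range_eq_Ico, ← Finset.sum_Ico_consecutive _ (by omega : 0 ≤ 2) (by omega : 2 ≤ N),
    hIcc, ← Finset.range_eq_Ico]
  simp [Finset.sum_range_succ]

lemma sweep_sum [NeZero N] (δ : ZMod N → ℝ) : ∑ i : ZMod N, sweep δ i = ∑ i : ZMod N, δ i := by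
  unfold sweep; exact sweepAux_sum hN δ (N-1)

lemma sweep_key [NeZero N] {δ : ZMod N → ℝ} (hpos : ∀ i, 0 ≤ δ i) :
    δ 0 + (1/2 : ℝ) ^ (N - 2) * ((∑ i : ZMod N, δ i) - δ 0) ≤ sweep δ 0 := by
  obtain ⟨H1, H2, H3⟩ := sweepAux_invariant hN (δ := δ) hpos (N-2) (by omega) (le_refl _)
  have hstep : sweep δ = incUpdate (sweepAux δ (N-2)) (((N-2)+1 : ℕ) : ZMod N) := by
    unfold sweep; rw [show N - 1 = (N-2)+1 from by omega]; rfl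
  have h0e : (0 : ZMod N) ≠ (((N-2)+1 : ℕ) : ZMod N) := by
    rw [show (0 : ZMod N) = ((0:ℕ) : ZMod N) from by norm_num]
    intro h; have := cast_injN (by omega) (by omega) h; omega
  have hor : (0 : ZMod N) = (((N-2)+1 : ℕ) : ZMod N) + 1 := by
    rw [show (((N-2)+1 : ℕ) : ZMod N) + 1 = (((N-2)+2 : ℕ) : ZMod N) from by push_cast; ring,
      show (N-2)+2 = N from by omega, ZMod.natCast_self]
  have hval : sweep δ 0 = sweepAux δ (N-2) 0 + sweepAux δ (N-2) (((N-2)+1 : ℕ) : ZMod N) / 2 := by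
    rw [hstep, incUpdate_apply_nb _ _ _ h0e (Or.inr hor)]
  rw [hval, H2]
  have hsum := sum_split hN (fun i => δ ((i : ℕ) : ZMod N))
  rw [← zmod_sum_eq] at hsum
  have hT : (0:ℝ) ≤ ∑ i ∈ Finset.Icc 2 ((N-2)+1), δ ((i : ℕ) : ZMod N) :=
    Finset.sum_nonneg fun i _ => hpos _
  have hc2 : ((1:ℝ)/2) ^ (N-2) = (1/2) ^ (N-2-1) * (1/2) := by
    rw [← pow_succ]; congr 1; omega
  have hcle : ((1:ℝ)/2) ^ (N-2) ≤ 1/2 := by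
    calc ((1:ℝ)/2) ^ (N-2) ≤ (1/2)^1 :=
        pow_le_pow_of_le_one (by norm_num) (by norm_num) (by omega)
      _ = 1/2 := pow_one _
  have hδ1 : (0:ℝ) ≤ δ 1 := hpos 1
  have h01 : ((0:ℕ) : ZMod N) = (0 : ZMod N) := by norm_num
  have h11 : ((1:ℕ) : ZMod N) = (1 : ZMod N) := by norm_num
  rw [h01, h11] at hsum
  have hIccEq : Finset.Icc 2 ((N-2)+1) = Finset.Icc 2 (N-1) := by congr 1; omega
  rw [hIccEq] at H3 hT
  have hc : ((1:ℝ)/2) ^ (N-2) * ∑ i ∈ Finset.Icc 2 (N-1), δ ((i : ℕ) : ZMod N)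
      ≤ sweepAux δ (N-2) (((N-2)+1 : ℕ) : ZMod N) / 2 := by
    rw [hc2]
    linarith [H3]
  nlinarith [mul_le_mul_of_nonneg_right hcle hδ1]

end


/-- Monotone accumulation at the closing edge.  Starting from a nonnegative
increment field with total mass `M`, iterated cyclic sweeps preserve nonnegativity and the
total mass, the value at the closing edge (vertex `N`, i.e. `0` in `ZMod N`) is
nondecreasing, the deficit contracts geometrically with ratio `1 - 2^{-(N-2)}`, and the
closing increment converges to `M`. -/
theorem monotone_accumulation_closing_edge
    (N : ℕ) [NeZero N] (hN : 3 ≤ N)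
    (δ0 : ZMod N → ℝ) (hpos : ∀ i, 0 ≤ δ0 i)
    (M : ℝ) (hM : M = ∑ i : ZMod N, δ0 i) :
    (∀ (m : ℕ) (i : ZMod N), 0 ≤ (sweep^[m] δ0) i) ∧
    (∀ m : ℕ, ∑ i : ZMod N, (sweep^[m] δ0) i = M) ∧
    (Monotone fun m : ℕ => (sweep^[m] δ0) 0) ∧
    (∀ m : ℕ, M - (sweep^[m] δ0) 0
      ≤ (1 - (1 / 2 : ℝ) ^ (N - 2)) ^ m * (M - δ0 0)) ∧
    Tendsto (fun m : ℕ => (sweep^[m] δ0) 0) atTop (nhds M) := by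
  set c : ℝ := (1/2 : ℝ) ^ (N - 2) with hc
  have hc0 : 0 < c := by positivity
  have hc1 : c ≤ 1 := pow_le_one₀ (by norm_num) (by norm_num)
  have hnn : ∀ (m : ℕ) (i : ZMod N), 0 ≤ (sweep^[m] δ0) i := by
    intro m
    induction m with
    | zero => exact hpos
    | succ m ih =>
      rw [Function.iterate_succ_apply']
      exact sweepAux_nonneg hN ih _
  have hsum : ∀ m : ℕ, ∑ i : ZMod N, (sweep^[m] δ0) i = M := by
    intro m
    induction m with
    | zero => exact hM.symm
    | succ m ih =>
      rw [Function.iterate_succ_apply', sweep_sum hN, ih]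
  have hdef : ∀ m : ℕ, 0 ≤ M - (sweep^[m] δ0) 0 := by
    intro m
    have : (sweep^[m] δ0) 0 ≤ ∑ i : ZMod N, (sweep^[m] δ0) i :=
      Finset.single_le_sum (fun i _ => hnn m i) (Finset.mem_univ 0)
    rw [hsum m] at this
    linarith
  have hstep : ∀ m : ℕ, (sweep^[m] δ0) 0 + c * (M - (sweep^[m] δ0) 0)
      ≤ (sweep^[m+1] δ0) 0 := by
    intro m
    rw [Function.iterate_succ_apply']
    have := sweep_key hN (hnn m)
    rw [hsum m] at this
    exact this
  have hmono : Monotone fun m : ℕ => (sweep^[m] δ0) 0 := by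
    apply monotone_nat_of_le_succ
    intro m
    have h1 := hstep m
    have h2 := hdef m
    nlinarith
  have hcontr : ∀ m : ℕ, M - (sweep^[m] δ0) 0 ≤ (1 - c) ^ m * (M - δ0 0) := by
    intro m
    induction m with
    | zero => simp
    | succ m ih =>
      have h1 := hstep m
      have h2 := hdef m
      calc M - (sweep^[m+1] δ0) 0 ≤ (1 - c) * (M - (sweep^[m] δ0) 0) := by nlinarith
        _ ≤ (1 - c) * ((1 - c) ^ m * (M - δ0 0)) :=
            mul_le_mul_of_nonneg_left ih (by linarith)
        _ = (1 - c) ^ (m+1) * (M - δ0 0) := by ring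
  refine ⟨hnn, hsum, hmono, hcontr, ?_⟩
  have hpow : Tendsto (fun m : ℕ => (1 - c) ^ m * (M - δ0 0)) atTop (nhds 0) := by
    have := (tendsto_pow_atTop_nhds_zero_of_lt_one (by linarith) (by linarith :
      (1:ℝ) - c < 1)).mul_const (M - δ0 0)
    simpa using this
  have hsq : Tendsto (fun m : ℕ => M - (sweep^[m] δ0) 0) atTop (nhds 0) :=
    squeeze_zero hdef hcontr hpow
  have := hsq.const_sub M
  simpa using this
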